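/- Let g be a real Lie algebra and J : g → g an ℝ-linear map with J ∘ J = −id satisfying the abelian condition [Jx, Jy] = [x, y] for all x, y ∈ g. Then every term Z^i(g) of the ascending central series (Z^0(g) = 0, Z^{i+1}(g) = {x ∈ g : [x, g] ⊆ Z^i(g)}) is J-invariant: J(Z^i(g)) = Z^i(g) for all i. In particular the centre of g is J-invariant. -/
import Mathlib


/-- If `J` is an almost complex structure on a real Lie algebra `g` (`J² = -id`)
satisfying the abelian condition `[Jx, Jy] = [x, y]`, then every term
`Z^i(g) = LieSubmodule.ucs i ⊥` of the ascending central series is `J`-invariant: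
`J(Z^i(g)) = Z^i(g)`.  (In particular the centre of `g` is `J`-invariant.) -/
theorem ucs_J_invariant_of_abelian
    {g : Type*} [LieRing g] [LieAlgebra ℝ g]
    (J : g →ₗ[ℝ] g) (hJ : ∀ x, J (J x) = -x)
    (hab : ∀ x y : g, ⁅J x, J y⁆ = ⁅x, y⁆) :
    ∀ i : ℕ,
      Submodule.map J (LieSubmodule.ucs i (⊥ : LieIdeal ℝ g)).toSubmodule =
        (LieSubmodule.ucs i (⊥ : LieIdeal ℝ g)).toSubmodule := by
  -- First show `J` maps each term into itself.
  have key : ∀ i : ℕ, ∀ x ∈ LieSubmodule.ucs i (⊥ : LieIdeal ℝ g),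
      J x ∈ LieSubmodule.ucs i (⊥ : LieIdeal ℝ g) := by
    intro i
    induction i with
    | zero =>
      intro x hx
      simp only [LieSubmodule.ucs_zero, LieSubmodule.mem_bot] at hx ⊢
      simp [hx]
    | succ k ih =>
      intro x hx
      rw [LieSubmodule.ucs_succ, LieSubmodule.mem_normalizer] at hx ⊢
      intro y
      have h1 : ⁅y, J x⁆ = -⁅J y, x⁆ := by
        have := hab (-(J y)) x
        rw [map_neg, hJ, neg_neg, neg_lie] at this
        exact this
      rw [h1]
      exact neg_mem (hx (J y))
  intro i
  apply le_antisymm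
  · rintro _ ⟨x, hx, rfl⟩
    exact key i x hx
  · intro x hx
    refine ⟨-(J x), ?_, by rw [map_neg, hJ, neg_neg]⟩
    exact neg_mem (key i x hx)
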